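/- There exist nonempty complete separable metric spaces X and Y and a continuous surjection F : X → Y which is isometrically containing for the class of all continuous surjections between nonempty compact metric spaces; that is, for every pair of nonempty compact metric spaces K, L and every continuous surjection g : K → L, there exist isometric embeddings i : K → X and j : L → Y such that F ∘ i = j ∘ g. -/

import Mathlib

open TopologicalSpace Metric Set

/-- The Hilbert cube, as a countable product of intervals with the `PiCountable` metric. -/
def Q0 : Type := ℕ → Icc (0:ℝ) 1

noncomputable instance : MetricSpace Q0 := PiCountable.metricSpace
instance : CompactSpace Q0 := inferInstanceAs (CompactSpace (ℕ → Icc (0:ℝ) 1))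
instance : Nonempty Q0 := ⟨fun _ => ⟨0, by norm_num, by norm_num⟩⟩
instance : SecondCountableTopology Q0 :=
  inferInstanceAs (SecondCountableTopology (ℕ → Icc (0:ℝ) 1))

theorem exists_h (K : Type) [MetricSpace K] [CompactSpace K] [Nonempty K] :
    ∃ h : K → Q0, Function.Injective h ∧ (∀ k k', dist (h k) (h k') ≤ dist k k') := by
  have : SeparableSpace K := inferInstance
  set u : ℕ → K := denseSeq K with hu
  have hmem : ∀ (k : K) (n : ℕ), ((4:ℝ)⁻¹)^(n+1) * min 1 (dist k (u n)) ∈ Icc (0:ℝ) 1 := by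
    intro k n
    refine ⟨by positivity, ?_⟩
    have h1 : ((4:ℝ)⁻¹)^(n+1) ≤ 1 := pow_le_one₀ (by norm_num) (by norm_num)
    have h2 : min 1 (dist k (u n)) ≤ 1 := min_le_left _ _
    have h3 : (0:ℝ) ≤ min 1 (dist k (u n)) := le_min (by norm_num) dist_nonneg
    nlinarith
  set h : K → Q0 := fun k n => ⟨((4:ℝ)⁻¹)^(n+1) * min 1 (dist k (u n)), hmem k n⟩ with hh
  have coord_le : ∀ (k k' : K) (n : ℕ), dist (h k n) (h k' n) ≤ ((4:ℝ)⁻¹)^(n+1) * dist k k' := by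
    intro k k' n
    rw [Subtype.dist_eq]
    simp only [hh]
    rw [Real.dist_eq, ← mul_sub, abs_mul, abs_of_nonneg (by positivity : (0:ℝ) ≤ ((4:ℝ)⁻¹)^(n+1))]
    have h1 : |min 1 (dist k (u n)) - min 1 (dist k' (u n))| ≤ dist k k' := by
      refine le_trans (abs_min_sub_min_le_max 1 (dist k (u n)) 1 (dist k' (u n))) ?_
      rw [sub_self, abs_zero, max_le_iff]
      refine ⟨dist_nonneg, ?_⟩
      rw [← Real.dist_eq]
      exact dist_dist_dist_le_left k k' (u n)
    exact mul_le_mul_of_nonneg_left h1 (by positivity)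
  refine ⟨h, ?_, ?_⟩
  · -- injective
    intro k k' hkk'
    by_contra hne
    have hr : 0 < dist k k' := dist_pos.2 hne
    set ε : ℝ := min (dist k k') 1 / 2 with hε
    have hεpos : 0 < ε := by positivity
    have hε1 : ε ≤ 1/2 := by rw [hε]; gcongr; exact min_le_right _ _
    have hεr : ε ≤ dist k k' / 2 := by rw [hε]; gcongr; exact min_le_left _ _
    obtain ⟨n, hn⟩ : ∃ n, dist k (u n) < ε := (denseRange_denseSeq K).exists_dist_lt k hεpos
    have hcv : min 1 (dist k (u n)) = min 1 (dist k' (u n)) := by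
      have := congrArg Subtype.val (congrFun hkk' n)
      simp only [hh] at this
      exact mul_left_cancel₀ (by positivity) this
    have h1 : min 1 (dist k (u n)) < ε := lt_of_le_of_lt (min_le_right _ _) hn
    have hd' : ε < dist k' (u n) := by
      have h3 : dist k k' ≤ dist k (u n) + dist (u n) k' := dist_triangle _ _ _
      rw [dist_comm (u n) k'] at h3
      nlinarith
    have h2 : ε < min 1 (dist k' (u n)) := lt_min_iff.2 ⟨by linarith, hd'⟩
    rw [hcv] at h1
    linarith
  · -- contraction
    intro k k'
    have heq : dist (h k) (h k') = ∑' n : ℕ, min ((1/2)^(n:ℕ) : ℝ) (dist (h k n) (h k' n)) := by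
      show (∑' i : ℕ, min ((2:ℝ)⁻¹ ^ Encodable.encode i) (dist (h k i) (h k' i))) = _
      simp [one_div]
    rw [heq]
    have hsum2 : Summable fun n : ℕ => ((4:ℝ)⁻¹)^n * (dist k k' * 4⁻¹) :=
      (summable_geometric_of_lt_one (by norm_num) (by norm_num)).mul_right _
    have hterm : ∀ n : ℕ, min ((1/2)^(n:ℕ) : ℝ) (dist (h k n) (h k' n))
        ≤ ((4:ℝ)⁻¹)^n * (dist k k' * 4⁻¹) := by
      intro n
      refine le_trans (min_le_right _ _) (le_trans (coord_le k k' n) ?_)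
      rw [pow_succ]
      ring_nf
      exact le_refl _
    calc (∑' n : ℕ, min ((1/2)^(n:ℕ) : ℝ) (dist (h k n) (h k' n)))
        ≤ ∑' n : ℕ, ((4:ℝ)⁻¹)^n * (dist k k' * 4⁻¹) := by
          refine Summable.tsum_le_tsum hterm ?_ hsum2
          simpa [one_div] using PiCountable.dist_summable (h k) (h k')
      _ = (1 - 4⁻¹)⁻¹ * (dist k k' * 4⁻¹) := by
          rw [tsum_mul_right, tsum_geometric_of_lt_one (by norm_num) (by norm_num)]
      _ ≤ dist k k' := by
          have := dist_nonneg (x := k) (y := k')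
          nlinarith

theorem exists_delta {K : Type} [MetricSpace K] [CompactSpace K] {h : K → Q0}
    (hcont : Continuous h) (hinj : Function.Injective h) {ε : ℝ} (hε : 0 < ε) :
    ∃ δ > 0, ∀ k k', dist (h k) (h k') < δ → dist k k' ≤ ε := by
  set S : Set (K × K) := {p | ε ≤ dist p.1 p.2} with hS
  have hSclosed : IsClosed S := isClosed_le continuous_const (by fun_prop)
  have hScompact : IsCompact S := hSclosed.isCompact
  rcases S.eq_empty_or_nonempty with hne | hne
  · refine ⟨1, one_pos, fun k k' _ => ?_⟩
    by_contra hcon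
    have : (k, k') ∈ S := le_of_lt (not_le.1 hcon)
    rw [hne] at this
    exact this
  · obtain ⟨p₀, hp₀S, hp₀min⟩ := hScompact.exists_isMinOn hne
      (f := fun p => dist (h p.1) (h p.2)) (by fun_prop)
    refine ⟨dist (h p₀.1) (h p₀.2), ?_, ?_⟩
    · rw [gt_iff_lt, dist_pos]
      intro heq
      have : p₀.1 = p₀.2 := hinj heq
      have h2 : ε ≤ dist p₀.1 p₀.2 := hp₀S
      rw [this, dist_self] at h2
      linarith
    · intro k k' hlt
      by_contra hcon
      have hmem : (k, k') ∈ S := le_of_lt (not_le.1 hcon)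
      have := hp₀min hmem
      simp only [Set.mem_setOf_eq] at this
      exact absurd hlt (not_lt.2 this)

theorem exists_J (L : Type) [MetricSpace L] [CompactSpace L] [Nonempty L] :
    ∃ j : L → C(Q0, ℝ), Isometry j := by
  obtain ⟨h, hinj, hcon⟩ := exists_h L
  have hlip : LipschitzWith 1 h := LipschitzWith.of_dist_le_mul (by simpa using hcon)
  have hcont : Continuous h := hlip.continuous
  -- a bound on the diameter
  obtain ⟨M, hM0, hM⟩ : ∃ M, 0 ≤ M ∧ ∀ z z' : L, dist z z' ≤ M := by
    obtain ⟨C, hC⟩ := Metric.isBounded_iff.1 (isCompact_univ (X := L)).isBounded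
    exact ⟨max C 0, le_max_right _ _,
      fun z z' => le_trans (hC (mem_univ z) (mem_univ z')) (le_max_left _ _)⟩
  -- the modulus data
  have hEps : ∀ e : {ε : ℝ // 0 < ε}, ∃ δ, 0 < δ ∧
      ∀ z z', dist (h z) (h z') < δ → dist z z' ≤ e.1 := by
    intro e
    obtain ⟨δ, hδ, hP⟩ := exists_delta hcont hinj e.2
    exact ⟨δ, hδ, hP⟩
  choose δ hδpos hδ using hEps
  haveI : Nonempty {ε : ℝ // 0 < ε} := ⟨⟨1, one_pos⟩⟩
  set ω : ℝ → ℝ := fun t => ⨅ e : {ε : ℝ // 0 < ε}, (e.1 + M / δ e * t) with hω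
  have term_nonneg : ∀ (e : {ε : ℝ // 0 < ε}) (t : ℝ), 0 ≤ t → 0 ≤ e.1 + M / δ e * t := by
    intro e t ht
    have h1 := hδpos e
    have h2 := e.2
    positivity
  have bdd : ∀ t : ℝ, 0 ≤ t → BddBelow (range fun e : {ε : ℝ // 0 < ε} => e.1 + M / δ e * t) := by
    intro t ht
    exact ⟨0, by rintro x ⟨e, rfl⟩; exact term_nonneg e t ht⟩
  have ω_le : ∀ (e : {ε : ℝ // 0 < ε}) (t : ℝ), 0 ≤ t → ω t ≤ e.1 + M / δ e * t := by
    intro e t ht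
    exact ciInf_le (bdd t ht) e
  have ω_nonneg : ∀ t : ℝ, 0 ≤ t → 0 ≤ ω t := by
    intro t ht
    exact le_ciInf fun e => term_nonneg e t ht
  have ω_mono : ∀ s t : ℝ, 0 ≤ s → s ≤ t → ω s ≤ ω t := by
    intro s t hs hst
    refine le_ciInf fun e => le_trans (ω_le e s hs) ?_
    have : 0 ≤ M / δ e := by have := hδpos e; positivity
    nlinarith
  have ω_zero : ω 0 = 0 := by
    refine le_antisymm ?_ (ω_nonneg 0 le_rfl)
    refine le_of_forall_pos_le_add fun ε hε => ?_
    have := ω_le ⟨ε, hε⟩ 0 le_rfl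
    simpa using this
  have ω_dom : ∀ z z', dist z z' ≤ ω (dist (h z) (h z')) := by
    intro z z'
    refine le_ciInf fun e => ?_
    by_cases hc : dist (h z) (h z') < δ e
    · have h1 := hδ e z z' hc
      have h2 : 0 ≤ M / δ e * dist (h z) (h z') := by
        have := hδpos e; positivity
      linarith
    · push_neg at hc
      have h1 : dist z z' ≤ M := hM z z'
      have h2 : M = M / δ e * δ e := by field_simp [ne_of_gt (hδpos e)]
      have h3 : M / δ e * δ e ≤ M / δ e * dist (h z) (h z') := by
        have : 0 ≤ M / δ e := by have := hδpos e; positivity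
        nlinarith
      have := e.2
      linarith [h2 ▸ h1, h3]
  have ω_subadd : ∀ s t : ℝ, 0 ≤ s → 0 ≤ t → ω (s + t) ≤ ω s + ω t := by
    intro s t hs ht
    rcases eq_or_lt_of_le (add_nonneg hs ht) with hst | hst
    · have hs0 : s = 0 := by linarith
      have ht0 : t = 0 := by linarith
      rw [hs0, ht0]
      simp [ω_zero]
    · have hstpos : 0 < s + t := hst
      have key : ∀ (r : ℝ), 0 ≤ r → r ≤ s + t → r / (s + t) * ω (s + t) ≤ ω r := by
        intro r hr hrle
        refine le_ciInf fun e => ?_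
        have h1 : ω (s + t) ≤ e.1 + M / δ e * (s + t) := ω_le e _ (le_of_lt hstpos)
        have ha : 0 ≤ r / (s + t) := by positivity
        have ha1 : r / (s + t) ≤ 1 := by
          rw [div_le_one hstpos]; exact hrle
        have h2 : r / (s + t) * ω (s + t) ≤ r / (s + t) * (e.1 + M / δ e * (s + t)) :=
          mul_le_mul_of_nonneg_left h1 ha
        have hcancel : r / (s+t) * (s+t) = r := div_mul_cancel₀ r (ne_of_gt hstpos)
        have h3 : r / (s + t) * (e.1 + M / δ e * (s + t)) = r / (s+t) * e.1 + M / δ e * r := by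
          calc r / (s+t) * (e.1 + M / δ e * (s + t))
              = r/(s+t) * e.1 + M / δ e * (r/(s+t)*(s+t)) := by ring
            _ = r/(s+t) * e.1 + M / δ e * r := by rw [hcancel]
        have h4 : r / (s+t) * e.1 ≤ e.1 := by nlinarith [e.2]
        linarith
      have k1 := key s hs (by linarith)
      have k2 := key t ht (by linarith)
      have hsum : s / (s+t) * ω (s+t) + t / (s+t) * ω (s+t) = ω (s+t) := by
        field_simp
      linarith
  have ω_small : ∀ η : ℝ, 0 < η → ∃ t : ℝ, 0 < t ∧ ω t ≤ η := by
    intro η hη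
    set e : {ε : ℝ // 0 < ε} := ⟨η/2, by positivity⟩ with he
    set C : ℝ := M / δ e with hC
    have hC0 : 0 ≤ C := by have := hδpos e; positivity
    refine ⟨(η/2) / (C + 1), by positivity, ?_⟩
    have h1 := ω_le e ((η/2) / (C + 1)) (by positivity)
    have h4 : (0:ℝ) < C + 1 := by linarith
    have hx : (η/2/(C+1)) * (C+1) = η/2 := div_mul_cancel₀ _ (ne_of_gt h4)
    have hx0 : (0:ℝ) ≤ η/2/(C+1) := by positivity
    have h2 : C * (η/2/(C+1)) ≤ η/2 := by nlinarith
    have h7 : (e : ℝ) = η / 2 := rfl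
    rw [h7, ← hC] at h1
    linarith
  -- the embedding
  haveI : Nonempty L := ‹_›
  have jbdd : ∀ (l : L) (q : Q0), BddBelow (range fun z : L => dist l z + ω (dist q (h z))) := by
    intro l q
    refine ⟨0, ?_⟩
    rintro x ⟨z, rfl⟩
    show (0:ℝ) ≤ dist l z + ω (dist q (h z))
    have := ω_nonneg (dist q (h z)) dist_nonneg
    have := dist_nonneg (x := l) (y := z)
    linarith
  set jf : L → Q0 → ℝ := fun l q => ⨅ z : L, (dist l z + ω (dist q (h z))) with hjf
  have key_q : ∀ (l : L) (q q' : Q0), jf l q ≤ jf l q' + ω (dist q q') := by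
    intro l q q'
    rw [← sub_le_iff_le_add]
    refine le_ciInf fun z => ?_
    have h1 : jf l q ≤ dist l z + ω (dist q (h z)) := ciInf_le (jbdd l q) z
    have h2 : dist q (h z) ≤ dist q' (h z) + dist q q' := by
      have h0 := dist_triangle_left q (h z) q'
      rw [dist_comm q q']
      linarith
    have h3 : ω (dist q (h z)) ≤ ω (dist q' (h z) + dist q q') :=
      ω_mono _ _ dist_nonneg h2
    have h4 : ω (dist q' (h z) + dist q q') ≤ ω (dist q' (h z)) + ω (dist q q') :=
      ω_subadd _ _ dist_nonneg dist_nonneg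
    linarith
  have key_l : ∀ (l l' : L) (q : Q0), jf l q ≤ jf l' q + dist l l' := by
    intro l l' q
    rw [← sub_le_iff_le_add]
    refine le_ciInf fun z => ?_
    have h1 : jf l q ≤ dist l z + ω (dist q (h z)) := ciInf_le (jbdd l q) z
    have h2 : dist l z ≤ dist l' z + dist l l' := by
      have h0 := dist_triangle_left l z l'
      rw [dist_comm l l']
      linarith
    linarith
  have jcont : ∀ l : L, Continuous (jf l) := by
    intro l
    rw [Metric.continuous_iff]
    intro q ε hε
    obtain ⟨t, ht, hωt⟩ := ω_small (ε/2) (by positivity)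
    refine ⟨t, ht, fun q' hq' => ?_⟩
    have h1 := key_q l q' q
    have h2 := key_q l q q'
    rw [dist_comm q' q] at h1
    have h3 : ω (dist q q') ≤ ω t := ω_mono _ _ dist_nonneg (by rw [dist_comm]; exact hq'.le)
    rw [Real.dist_eq, abs_sub_lt_iff]
    have hhalf : ε / 2 < ε := by linarith
    constructor <;> linarith
  have at_h : ∀ (l z : L), jf l (h z) = dist l z := by
    intro l z
    refine le_antisymm ?_ ?_
    · have h1 : jf l (h z) ≤ dist l z + ω (dist (h z) (h z)) := ciInf_le (jbdd l (h z)) z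
      rw [dist_self, ω_zero] at h1
      simpa using h1
    · refine le_ciInf fun z' => ?_
      have h1 : dist z z' ≤ ω (dist (h z) (h z')) := by
        have := ω_dom z z'
        rwa [dist_comm (h z) (h z')] at this ⊢
      have h2 : dist l z ≤ dist l z' + dist z' z := dist_triangle _ _ _
      rw [dist_comm z' z] at h2
      linarith
  set j : L → C(Q0, ℝ) := fun l => ⟨jf l, jcont l⟩ with hj
  refine ⟨j, Isometry.of_dist_eq fun l l' => ?_⟩
  refine le_antisymm ?_ ?_
  · rw [ContinuousMap.dist_le dist_nonneg]
    intro q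
    have h1 := key_l l l' q
    have h2 := key_l l' l q
    rw [dist_comm l' l] at h2
    have hq : dist (j l q) (j l' q) = |jf l q - jf l' q| := by
      simp [hj, Real.dist_eq]
    rw [hq, abs_sub_le_iff]
    exact ⟨by linarith, by linarith⟩
  · have h1 : dist (j l (h l')) (j l' (h l')) ≤ dist (j l) (j l') :=
      ContinuousMap.dist_apply_le_dist _
    have h2 : j l (h l') = dist l l' := at_h l l'
    have h3 : j l' (h l') = 0 := by
      have := at_h l' l'
      show jf l' (h l') = 0
      simpa using this
    rw [h2, h3, Real.dist_eq, sub_zero, abs_of_nonneg dist_nonneg] at h1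
    exact h1

/-- There exist nonempty complete separable metric spaces `X`, `Y` and a continuous
surjection `F : X → Y` which is isometrically containing for the class of all continuous
surjections between nonempty compact metric spaces. -/
theorem exists_isometrically_containing_for_compacta :
    ∃ (X Y : Type) (_ : MetricSpace X) (_ : MetricSpace Y) (F : X → Y),
      Nonempty X ∧ Nonempty Y ∧
      CompleteSpace X ∧ CompleteSpace Y ∧
      TopologicalSpace.SeparableSpace X ∧ TopologicalSpace.SeparableSpace Y ∧
      Continuous F ∧ Function.Surjective F ∧
      ∀ (K L : Type) (_ : MetricSpace K) (_ : MetricSpace L),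
        Nonempty K → CompactSpace K → Nonempty L → CompactSpace L →
        ∀ g : K → L, Continuous g → Function.Surjective g →
          ∃ (i : K → X) (j : L → Y), Isometry i ∧ Isometry j ∧ F ∘ i = j ∘ g := by
  refine ⟨C(Q0, C(Q0, ℝ)) × Q0 × C(Q0, ℝ), C(Q0, ℝ), inferInstance, inferInstance,
    fun p => p.1 p.2.1, ?_, ?_, ?_, ?_, ?_, ?_, ?_, ?_, ?_⟩
  · exact ⟨(ContinuousMap.const Q0 (ContinuousMap.const Q0 (0:ℝ)), Classical.arbitrary Q0,
      ContinuousMap.const Q0 (0:ℝ))⟩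
  · exact ⟨ContinuousMap.const Q0 (0:ℝ)⟩
  · infer_instance
  · infer_instance
  · infer_instance
  · infer_instance
  · have h1 : Continuous fun p : C(Q0, C(Q0,ℝ)) × Q0 => p.1 p.2 := ContinuousEval.continuous_eval
    exact h1.comp (continuous_fst.prodMk (continuous_fst.comp continuous_snd))
  · exact fun y => ⟨(ContinuousMap.const Q0 y, Classical.arbitrary Q0, y), rfl⟩
  · intro K L _ _ hKne hKcomp hLne hLcomp g hgcont hgsurj
    obtain ⟨hK, hKinj, hKcon⟩ := exists_h K
    have hKlip : LipschitzWith 1 hK := LipschitzWith.of_dist_le_mul (by simpa using hKcon)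
    have hKcont : Continuous hK := hKlip.continuous
    obtain ⟨ι, hι⟩ := exists_J K
    obtain ⟨j, hj⟩ := exists_J L
    -- the closed image of K in Q0
    set A : Set Q0 := Set.range hK with hA
    have hAcomp : IsCompact A := isCompact_range hKcont
    have hAclosed : IsClosed A := hAcomp.isClosed
    -- homeomorphism onto the image
    have hecont : Continuous (Equiv.ofInjective hK hKinj) := by
      exact Continuous.subtype_mk hKcont _
    set e : K ≃ₜ A := hecont.homeoOfEquivCompactToT2 with he
    -- the function on the closed strip
    set S : Set (Q0 × Q0) := {p | p.1 ∈ A} with hS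
    have hSclosed : IsClosed S := hAclosed.preimage continuous_fst
    set f₀ : C(S, ℝ) := ⟨fun p => j (g (e.symm ⟨p.1.1, p.2⟩)) p.1.2, by
      have hc1 : Continuous fun p : S => (e.symm ⟨p.1.1, p.2⟩ : K) := by
        refine e.symm.continuous.comp ?_
        exact Continuous.subtype_mk ((continuous_fst.comp continuous_subtype_val)) _
      have hc2 : Continuous fun p : S => (j (g (e.symm ⟨p.1.1, p.2⟩)) : C(Q0,ℝ)) :=
        (hj.continuous.comp hgcont).comp hc1
      have hc3 : Continuous fun p : S => ((p : Q0 × Q0).2 : Q0) :=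
        continuous_snd.comp continuous_subtype_val
      have h1 : Continuous fun p : C(Q0,ℝ) × Q0 => p.1 p.2 := ContinuousEval.continuous_eval
      exact h1.comp (hc2.prodMk hc3)⟩ with hf₀
    obtain ⟨v, hv⟩ := f₀.exists_restrict_eq hSclosed
    set G : C(Q0, C(Q0, ℝ)) := v.curry with hG
    have hGh : ∀ k : K, G (hK k) = j (g k) := by
      intro k
      ext q
      have hmem : ((hK k, q) : Q0 × Q0) ∈ S := ⟨k, rfl⟩
      have h2 := congrFun (congrArg DFunLike.coe hv) ⟨(hK k, q), hmem⟩
      have h3 : v (hK k, q) = f₀ ⟨(hK k, q), hmem⟩ := h2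
      have h4 : e.symm ⟨hK k, ⟨k, rfl⟩⟩ = k := by
        have h5 : e k = ⟨hK k, ⟨k, rfl⟩⟩ := rfl
        rw [← h5, Homeomorph.symm_apply_apply]
      simp only [hG, ContinuousMap.curry_apply]
      rw [h3]
      simp only [hf₀, ContinuousMap.coe_mk]
      rw [h4]
    refine ⟨fun k => (G, hK k, ι k), j, ?_, hj, ?_⟩
    · refine Isometry.of_dist_eq fun k k' => ?_
      rw [Prod.dist_eq, Prod.dist_eq, dist_self]
      rw [hι.dist_eq]
      rw [max_eq_right (hKcon k k'), max_eq_right dist_nonneg]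
    · funext k
      exact (hGh k).trans rfl
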